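/- For all natural numbers m and n, the Pell numbers satisfy P_{(2m+1)n} = Σ_{i=0}^{m} (-1)^{n(m+i)} · 2^{3i} · ((2m+1)/(2i+1)) · C(m+i, 2i) · P_n^{2i+1}, where the identity is understood as an equality of rational numbers (each coefficient ((2m+1)/(2i+1))·C(m+i,2i) is in fact an integer) and C(a,b) denotes the binomial coefficient. -/
import Mathlib


def pell : ℕ → ℤ
  | 0 => 0
  | 1 => 1
  | n + 2 => 2 * pell (n + 1) + pell n

lemma pell_two (n : ℕ) : pell (n + 2) = 2 * pell (n + 1) + pell n := rfl

lemma pell_add : ∀ a b : ℕ, pell (a + b + 1) = pell (a+1) * pell (b+1) + pell a * pell b := by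
  have key : ∀ a, (∀ b, pell (a + b + 1) = pell (a+1) * pell (b+1) + pell a * pell b) ∧
      (∀ b, pell (a+1 + b + 1) = pell (a+1+1) * pell (b+1) + pell (a+1) * pell b) := by
    intro a
    induction a with
    | zero =>
      constructor
      · intro b; simp [pell]
      · intro b
        rw [show 0+1+b+1 = b+2 by omega, pell_two]
        show _ = pell 2 * pell (b+1) + pell 1 * pell b
        rw [show (2:ℕ) = 0 + 2 from rfl, pell_two]
        simp [pell]
    | succ k ih =>
      refine ⟨ih.2, fun b => ?_⟩
      have h1 := ih.1 b
      have h2 := ih.2 b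
      rw [show k+1+1+b+1 = (k+b+1)+2 by omega, pell_two,
        show k+b+1+1 = k+1+b+1 by omega, h2, h1,
        show pell (k+1+1+1) = 2 * pell (k+1+1) + pell (k+1) from pell_two (k+1),
        show pell (k+1+1) = 2 * pell (k+1) + pell k from pell_two k]
      ring
  exact fun a => (key a).1

lemma pell_cassini (n : ℕ) :
    (pell (n+1))^2 - 2 * pell (n+1) * pell n - (pell n)^2 = (-1)^n := by
  induction n with
  | zero => simp [pell]
  | succ k ih =>
    rw [show pell (k+1+1) = 2 * pell (k+1) + pell k from pell_two k]
    have h : ((-1:ℤ))^(k+1) = -(-1)^k := by ring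
    rw [h, ← ih]; ring

lemma pell_double_odd (t : ℕ) : pell (2*t+1) = pell (t+1)^2 + pell t^2 := by
  have h := pell_add t t; rw [show t+t+1 = 2*t+1 by omega] at h; rw [h]; ring

lemma pell_double_even (t : ℕ) :
    pell (2*t+2) = pell (t+2) * pell (t+1) + pell (t+1) * pell t := by
  have h := pell_add (t+1) t; rw [show t+1+t+1 = 2*t+2 by omega] at h; rw [h]

lemma pell_three (n : ℕ) : pell (3*n) = 8*(pell n)^3 + 3*(-1)^n*(pell n) := by
  cases n with
  | zero => simp [pell]
  | succ t =>
    have hmain : pell (3*(t+1)) = pell (2*t+2) * pell (t+2) + pell (2*t+1) * pell (t+1) := by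
      have h := pell_add (2*t+1) (t+1)
      rw [show 2*t+1+(t+1)+1 = 3*(t+1) by omega] at h
      rw [h, show 2*t+1+1 = 2*t+2 by omega]
    have hc := pell_cassini t
    rw [hmain, pell_double_odd, pell_double_even,
        show pell (t+2) = 2*pell (t+1) + pell t from pell_two t,
        show ((-1:ℤ))^(t+1) = -(-1)^t by ring]
    linear_combination (-3*pell (t+1)) * hc

lemma pell_step (n b : ℕ) :
    pell (b + 4*n) + pell b = (8*(pell n)^2 + 2*(-1)^n) * pell (b + 2*n) := by
  cases n with
  | zero => norm_num [pell]; ring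
  | succ t =>
    have hC : pell (2*t+3) = 2*pell (2*t+2) + pell (2*t+1) := by
      rw [show 2*t+3 = (2*t+1)+2 by omega]; exact pell_two _
    have h1 : pell (b + 2*(t+1)) = pell (b+1) * pell (2*t+2) + pell b * pell (2*t+1) := by
      have h := pell_add b (2*t+1); rw [show b+(2*t+1)+1 = b+2*(t+1) by omega] at h
      rw [h, show 2*t+1+1 = 2*t+2 by omega]
    have h2 : pell (b + 2*(t+1) + 1) = pell (b+1) * pell (2*t+3) + pell b * pell (2*t+2) := by
      have h := pell_add b (2*t+2); rw [show b+(2*t+2)+1 = b+2*(t+1)+1 by omega] at h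
      rw [h, show 2*t+2+1 = 2*t+3 by omega]
    have h4 : pell (b + 4*(t+1)) =
        pell (b+2*(t+1)+1) * pell (2*t+2) + pell (b+2*(t+1)) * pell (2*t+1) := by
      have h := pell_add (b+2*(t+1)) (2*t+1)
      rw [show b+2*(t+1)+(2*t+1)+1 = b+4*(t+1) by omega] at h
      rw [h, show 2*t+1+1 = 2*t+2 by omega]
    have hc := pell_cassini t
    have he : ((-1:ℤ)^t)^2 = 1 := by rw [← pow_mul, mul_comm, pow_mul]; norm_num
    rw [h4, h2, h1, hC, pell_double_even, pell_double_odd,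
        show pell (t+2) = 2*pell (t+1) + pell t from pell_two t,
        show ((-1:ℤ))^(t+1) = -(-1)^t by ring]
    linear_combination (-3*pell (t+1)^2*pell b - 4*pell (t+1)^2*pell (b+1)
      + 2*pell (t+1)*pell t*pell b - 4*pell (t+1)*pell t*pell (b+1)
      - (-1:ℤ)^t*pell b - pell t^2*pell b) * hc + (-pell b) * he

def dd (m i : ℕ) : ℕ := Nat.choose (m+i) (2*i) + 2 * Nat.choose (m+i) (2*i+1)

lemma dd_eq_zero {m i : ℕ} (h : m < i) : dd m i = 0 := by
  unfold dd
  rw [Nat.choose_eq_zero_of_lt (by omega), Nat.choose_eq_zero_of_lt (by omega)]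

lemma choose_rec (N k : ℕ) :
    Nat.choose (N+1+1+1) (k+1+1) + 2 * Nat.choose (N+1+1+1) (k+1+1+1)
      + (Nat.choose (N+1) (k+1+1) + 2 * Nat.choose (N+1) (k+1+1+1))
    = 2 * (Nat.choose (N+1+1) (k+1+1) + 2 * Nat.choose (N+1+1) (k+1+1+1))
      + (Nat.choose (N+1) k + 2 * Nat.choose (N+1) (k+1)) := by
  simp only [Nat.choose_succ_succ']
  ring

lemma dd_rec (m i : ℕ) :
    dd (m+2) (i+1) + dd m (i+1) = 2 * dd (m+1) (i+1) + dd (m+1) i := by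
  have h := choose_rec (m+i) (2*i)
  unfold dd
  rw [show m+2+(i+1) = m+i+1+1+1 by omega, show 2*(i+1)+1 = 2*i+1+1+1 by omega,
      show 2*(i+1) = 2*i+1+1 by omega, show m+(i+1) = m+i+1 by omega,
      show m+1+(i+1) = m+i+1+1 by omega, show m+1+i = m+i+1 by omega]
  omega

lemma coeff_eq (m i : ℕ) :
    ((2*(m:ℚ)+1)/(2*i+1)) * (Nat.choose (m+i) (2*i) : ℚ) = (dd m i : ℚ) := by
  have h21 : (2*(i:ℚ)+1) ≠ 0 := by positivity
  rw [div_mul_eq_mul_div, div_eq_iff h21]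
  rcases le_or_gt i m with h | h
  · have hc := Nat.choose_succ_right_eq (m+i) (2*i)
    rw [show m + i - 2*i = m - i by omega] at hc
    have hcQ : (Nat.choose (m+i) (2*i+1) : ℚ) * (2*i+1)
        = (Nat.choose (m+i) (2*i) : ℚ) * ((m:ℚ) - i) := by
      have := congrArg (fun x : ℕ => (x : ℚ)) hc
      push_cast [h] at this ⊢
      linarith [this]
    unfold dd
    push_cast
    linear_combination (-2)*hcQ
  · rw [dd_eq_zero h, Nat.choose_eq_zero_of_lt (by omega)]
    norm_num

open Finset in
lemma sum_step (m : ℕ) (s x : ℚ) (hs : s^2 = 1) :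
    ∑ i ∈ range (m+3), s^(m+2+i) * 8^i * (dd (m+2) i : ℚ) * x^(2*i+1)
      = (8*x^2 + 2*s) * ∑ i ∈ range (m+2), s^(m+1+i) * 8^i * (dd (m+1) i : ℚ) * x^(2*i+1)
        - ∑ i ∈ range (m+1), s^(m+i) * 8^i * (dd m i : ℚ) * x^(2*i+1) := by
  have pad1 : ∑ i ∈ range (m+3), s^(m+1+i) * 8^i * (dd (m+1) i : ℚ) * x^(2*i+1)
      = ∑ i ∈ range (m+2), s^(m+1+i) * 8^i * (dd (m+1) i : ℚ) * x^(2*i+1) := by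
    rw [Finset.sum_range_succ, dd_eq_zero (by omega : m+1 < m+2)]
    norm_num
  have pad0 : ∑ i ∈ range (m+3), s^(m+i) * 8^i * (dd m i : ℚ) * x^(2*i+1)
      = ∑ i ∈ range (m+1), s^(m+i) * 8^i * (dd m i : ℚ) * x^(2*i+1) := by
    rw [Finset.sum_range_succ, Finset.sum_range_succ, dd_eq_zero (by omega : m < m+2),
      dd_eq_zero (by omega : m < m+1)]
    norm_num
  have key : ∑ i ∈ range (m+3),
      (s^(m+2+i) * 8^i * (dd (m+2) i : ℚ) * x^(2*i+1)
        + s^(m+i) * 8^i * (dd m i : ℚ) * x^(2*i+1)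
        - 2*s*(s^(m+1+i) * 8^i * (dd (m+1) i : ℚ) * x^(2*i+1)))
      = 8*x^2 * ∑ i ∈ range (m+2), s^(m+1+i) * 8^i * (dd (m+1) i : ℚ) * x^(2*i+1) := by
    rw [Finset.sum_range_succ']
    have h0 : s^(m+2+0) * 8^0 * (dd (m+2) 0 : ℚ) * x^(2*0+1)
        + s^(m+0) * 8^0 * (dd m 0 : ℚ) * x^(2*0+1)
        - 2*s*(s^(m+1+0) * 8^0 * (dd (m+1) 0 : ℚ) * x^(2*0+1)) = 0 := by
      have e2 : (dd (m+2) 0 : ℚ) = 2*m+5 := by simp [dd]; ring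
      have e1 : (dd (m+1) 0 : ℚ) = 2*m+3 := by simp [dd]; ring
      have e0 : (dd m 0 : ℚ) = 2*m+1 := by simp [dd]; ring
      rw [e2, e1, e0]
      linear_combination (-(2*(m:ℚ)+1)) * s^m * x * hs
    rw [h0, add_zero, Finset.mul_sum]
    apply Finset.sum_congr rfl
    intro i _
    have hd : (dd (m+2) (i+1) : ℚ) = 2*(dd (m+1) (i+1) : ℚ) + (dd (m+1) i : ℚ) - (dd m (i+1) : ℚ) := by
      have h := dd_rec m i
      have := congrArg (fun x : ℕ => (x : ℚ)) h
      push_cast at this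
      linarith
    rw [hd]
    linear_combination (8^(i+1) * x^(2*i+3) * ((dd (m+1) i : ℚ) - (dd m (i+1) : ℚ)) * s^(m+1+i)) * hs
  have hsplit : ∑ i ∈ range (m+3), s^(m+2+i) * 8^i * (dd (m+2) i : ℚ) * x^(2*i+1)
      = (∑ i ∈ range (m+3),
          (s^(m+2+i) * 8^i * (dd (m+2) i : ℚ) * x^(2*i+1)
            + s^(m+i) * 8^i * (dd m i : ℚ) * x^(2*i+1)
            - 2*s*(s^(m+1+i) * 8^i * (dd (m+1) i : ℚ) * x^(2*i+1))))
        - (∑ i ∈ range (m+3), s^(m+i) * 8^i * (dd m i : ℚ) * x^(2*i+1))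
        + 2*s*(∑ i ∈ range (m+3), s^(m+1+i) * 8^i * (dd (m+1) i : ℚ) * x^(2*i+1)) := by
    rw [Finset.sum_sub_distrib, Finset.sum_add_distrib, Finset.mul_sum]
    ring
  rw [hsplit, key, pad1, pad0]
  ring

lemma neg_one_pow_sq (n : ℕ) : ((-1:ℚ)^n)^2 = 1 := by
  rw [← pow_mul, mul_comm, pow_mul]; norm_num

open Finset in
lemma main_aux (n : ℕ) : ∀ m : ℕ,
    ((pell ((2*m+1)*n) : ℚ)
      = ∑ i ∈ range (m+1), ((-1:ℚ)^n)^(m+i) * 8^i * (dd m i : ℚ) * (pell n : ℚ)^(2*i+1))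
    ∧ ((pell ((2*(m+1)+1)*n) : ℚ)
      = ∑ i ∈ range (m+2), ((-1:ℚ)^n)^(m+1+i) * 8^i * (dd (m+1) i : ℚ) * (pell n : ℚ)^(2*i+1)) := by
  intro m
  induction m with
  | zero =>
    constructor
    · norm_num [dd]
    · rw [show (2*(0+1)+1)*n = 3*n by ring]
      rw [Finset.sum_range_succ, Finset.sum_range_one]
      have hQ : (pell (3*n) : ℚ) = 8*(pell n : ℚ)^3 + 3*(-1:ℚ)^n*(pell n : ℚ) := by
        have h := pell_three n
        push_cast [h]
        ring
      rw [hQ]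
      have hs := neg_one_pow_sq n
      simp only [show dd 1 0 = 3 from rfl, show dd 1 1 = 1 from rfl]
      push_cast
      linear_combination (-8*(pell n : ℚ)^3) * hs
  | succ k ih =>
    refine ⟨ih.2, ?_⟩
    have hstep : (pell ((2*(k+2)+1)*n) : ℤ)
        = (8*(pell n)^2 + 2*(-1)^n) * pell ((2*(k+1)+1)*n) - pell ((2*k+1)*n) := by
      have h := pell_step n ((2*k+1)*n)
      rw [show (2*k+1)*n + 4*n = (2*(k+2)+1)*n by ring,
          show (2*k+1)*n + 2*n = (2*(k+1)+1)*n by ring] at h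
      linarith
    have hstepQ : (pell ((2*(k+2)+1)*n) : ℚ)
        = (8*(pell n:ℚ)^2 + 2*(-1:ℚ)^n) * (pell ((2*(k+1)+1)*n) : ℚ) - (pell ((2*k+1)*n) : ℚ) := by
      exact_mod_cast congrArg (fun z : ℤ => (z : ℚ)) hstep
    rw [show k+1+1 = k+2 from rfl, hstepQ, ih.2, ih.1]
    exact (sum_step k ((-1:ℚ)^n) (pell n : ℚ) (neg_one_pow_sq n)).symm

theorem pell_odd_mul (m n : ℕ) :
    (pell ((2 * m + 1) * n) : ℚ) =
      ∑ i ∈ Finset.range (m + 1),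
        (-1 : ℚ) ^ (n * (m + i)) * 2 ^ (3 * i) * ((2 * m + 1 : ℚ) / (2 * i + 1)) *
          (Nat.choose (m + i) (2 * i) : ℚ) * (pell n : ℚ) ^ (2 * i + 1) := by
  rw [(main_aux n m).1]
  apply Finset.sum_congr rfl
  intro i _
  rw [← coeff_eq m i, pow_mul (-1:ℚ) n (m+i), pow_mul (2:ℚ) 3 i]
  ring
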